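/- arXiv:2312.03473 — 2 statements merged into one kernel-verified Lean document; each statement's English description precedes it below -/
import Mathlib

section
/- Let K, K′ ⊆ ℝ_+^n be anti-blocking convex bodies and let 0 ≤ j ≤ n. Then V_n(K[j], −K′[n−j]) = binom(n,j)^{−1} Σ_E Vol_j(P_E K) · Vol_{n−j}(P_{E^⊥} K′), where the sum runs over all j-dimensional coordinate subspaces E = span{e_i : i ∈ I} with I ⊆ {1,…,n}, |I| = j, and P_E denotes orthogonal projection onto E. -/
open MeasureTheory
open scoped Pointwise

noncomputable section

/-- The nonnegative orthant `ℝ₊ⁿ`. -/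
def nonnegOrthant (n : ℕ) : Set (EuclideanSpace ℝ (Fin n)) := {x | ∀ i, 0 ≤ x i}

/-- The sign `±1` associated to a boolean. -/
def sgn (b : Bool) : ℝ := if b then 1 else -1

/-- The closed orthant `σ ℝ₊ⁿ` corresponding to a sign vector `σ ∈ {-1,1}ⁿ`. -/
def signedOrthant {n : ℕ} (σ : Fin n → Bool) : Set (EuclideanSpace ℝ (Fin n)) :=
  {x | ∀ i, 0 ≤ sgn (σ i) * x i}

/-- Coordinatewise reflection `σ S = {(σ₁x₁, …, σₙxₙ) : x ∈ S}`. -/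
def sigmaAct {n : ℕ} (σ : Fin n → Bool) (S : Set (EuclideanSpace ℝ (Fin n))) :
    Set (EuclideanSpace ℝ (Fin n)) :=
  (fun x => (WithLp.toLp 2 (fun i => sgn (σ i) * x i) : EuclideanSpace ℝ (Fin n))) '' S

/-- Orthogonal projection onto the coordinate subspace `span {eᵢ : i ∈ I}`. -/
def coordProj {n : ℕ} (I : Finset (Fin n)) (x : EuclideanSpace ℝ (Fin n)) :
    EuclideanSpace ℝ (Fin n) :=
  (WithLp.toLp 2 (fun i => if i ∈ I then x i else 0) : EuclideanSpace ℝ (Fin n))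

/-- The coordinate subspace `span {eᵢ : i ∈ I}`, as a set. -/
def coordSubspace {n : ℕ} (I : Finset (Fin n)) : Set (EuclideanSpace ℝ (Fin n)) :=
  {x | ∀ i ∉ I, x i = 0}

/-- A set `K ⊆ ℝ₊ⁿ` is anti-blocking if for every coordinate subspace `E` the orthogonal
projection `P_E K` equals the section `K ∩ E`. -/
def IsAntiBlocking {n : ℕ} (K : Set (EuclideanSpace ℝ (Fin n))) : Prop :=
  K ⊆ nonnegOrthant n ∧ ∀ I : Finset (Fin n), coordProj I '' K = K ∩ coordSubspace I

/-- `K` is locally anti-blocking if `(σK) ∩ ℝ₊ⁿ` is anti-blocking for every sign vector `σ`. -/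
def IsLocallyAntiBlocking {n : ℕ} (K : Set (EuclideanSpace ℝ (Fin n))) : Prop :=
  ∀ σ : Fin n → Bool, IsAntiBlocking (sigmaAct σ K ∩ nonnegOrthant n)

/-- The coordinate simplex `conv{0, e₁, …}` in the Euclidean space with coordinates `ι`. -/
def coordSimplex (ι : Type*) [Fintype ι] [DecidableEq ι] : Set (EuclideanSpace ℝ ι) :=
  convexHull ℝ (insert 0 (Set.range fun i : ι => EuclideanSpace.single i (1 : ℝ)))

/-- Restriction to the coordinates in `I`, realizing the orthogonal projection onto
`span {eᵢ : i ∈ I}` as a map onto a `#I`-dimensional Euclidean space (so that volumes of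
images compute lower-dimensional Lebesgue measures of coordinate projections). -/
def restrictCoords {n : ℕ} (I : Finset (Fin n)) (x : EuclideanSpace ℝ (Fin n)) :
    EuclideanSpace ℝ ↥I :=
  (WithLp.toLp 2 (fun i : ↥I => x i) : EuclideanSpace ℝ ↥I)


namespace ABHelper

open Finset in
variable {n : ℕ}

/-- The splitting of coordinates as a measurable equivalence. -/
def splitEquiv (I : Finset (Fin n)) :
    EuclideanSpace ℝ (Fin n) ≃ᵐ EuclideanSpace ℝ ↥I × EuclideanSpace ℝ ↥(Iᶜ) :=
  (MeasurableEquiv.toLp 2 (Fin n → ℝ)).symm.trans <|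
    (MeasurableEquiv.piEquivPiSubtypeProd (fun _ : Fin n => ℝ) (· ∈ I)).trans <|
      MeasurableEquiv.prodCongr (MeasurableEquiv.toLp 2 (↥I → ℝ)).symm.symm <|
        (MeasurableEquiv.piCongrLeft (fun _ => ℝ)
          (Equiv.subtypeEquivRight (fun x => (Finset.mem_compl (a := x)).symm))).trans
          (MeasurableEquiv.toLp 2 (↥(Iᶜ) → ℝ)).symm.symm

lemma splitEquiv_measurePreserving (I : Finset (Fin n)) :
    MeasurePreserving (splitEquiv I) volume (volume.prod volume) := by
  have h1 := EuclideanSpace.volume_preserving_symm_measurableEquiv_toLp (Fin n)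
  have h2 := volume_preserving_piEquivPiSubtypeProd (fun _ : Fin n => ℝ) (· ∈ I)
  have h3 := (EuclideanSpace.volume_preserving_symm_measurableEquiv_toLp ↥I).symm
  have h4 := volume_measurePreserving_piCongrLeft (fun _ : ↥(Iᶜ) => ℝ)
      (Equiv.subtypeEquivRight (fun x => (Finset.mem_compl (a := x)).symm))
  have h5 := (EuclideanSpace.volume_preserving_symm_measurableEquiv_toLp ↥(Iᶜ)).symm
  have h6 : MeasurePreserving
      (Prod.map (⇑(MeasurableEquiv.toLp 2 (↥I → ℝ)).symm.symm)
        (⇑((MeasurableEquiv.piCongrLeft (fun _ => ℝ)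
          (Equiv.subtypeEquivRight (fun x => (Finset.mem_compl (a := x)).symm))).trans
          (MeasurableEquiv.toLp 2 (↥(Iᶜ) → ℝ)).symm.symm)))
      (volume.prod volume) (volume.prod volume) :=
    h3.prod (h5.comp h4)
  rw [Measure.volume_eq_prod] at h2
  have h2' : MeasurePreserving
      (⇑(MeasurableEquiv.piEquivPiSubtypeProd (fun _ : Fin n => ℝ) (· ∈ I))) volume
      ((volume : Measure (↥I → ℝ)).prod (volume : Measure ({x : Fin n // ¬ x ∈ I} → ℝ))) := by
    convert h2 using 2
    congr!
    · rfl
    · congr; exact Subsingleton.elim _ _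
  have hfun : ⇑(splitEquiv I) =
      (Prod.map (⇑(MeasurableEquiv.toLp 2 (↥I → ℝ)).symm.symm)
        (⇑((MeasurableEquiv.piCongrLeft (fun _ => ℝ)
          (Equiv.subtypeEquivRight (fun x => (Finset.mem_compl (a := x)).symm))).trans
          (MeasurableEquiv.toLp 2 (↥(Iᶜ) → ℝ)).symm.symm))) ∘
        (⇑(MeasurableEquiv.piEquivPiSubtypeProd (fun _ : Fin n => ℝ) (· ∈ I))) ∘
        (⇑(MeasurableEquiv.toLp 2 (Fin n → ℝ)).symm) := rfl
  rw [hfun]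
  exact (h6.comp h2').comp h1

lemma splitEquiv_apply (I : Finset (Fin n)) (z : EuclideanSpace ℝ (Fin n)) :
    splitEquiv I z = (restrictCoords I z, restrictCoords Iᶜ z) := by
  ext i <;> simp [splitEquiv, restrictCoords, MeasurableEquiv.coe_toLp_symm, MeasurableEquiv.symm_symm,
    MeasurableEquiv.coe_toLp,
    MeasurableEquiv.piEquivPiSubtypeProd, MeasurableEquiv.prodCongr, MeasurableEquiv.piCongrLeft,
    Equiv.piCongrLeft, MeasurableEquiv.trans, Equiv.piEquivPiSubtypeProd, Equiv.piCongrLeft']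

/-- `restrictCoords` as a linear map. -/
def restrictL (I : Finset (Fin n)) : EuclideanSpace ℝ (Fin n) →ₗ[ℝ] EuclideanSpace ℝ ↥I where
  toFun := restrictCoords I
  map_add' _ _ := rfl
  map_smul' _ _ := by ext; rfl

lemma restrictCoords_continuous (I : Finset (Fin n)) : Continuous (restrictCoords I) :=
  by unfold restrictCoords; fun_prop

lemma coordProj_mem {K : Set (EuclideanSpace ℝ (Fin n))} (hab : IsAntiBlocking K)
    (I : Finset (Fin n)) {x : EuclideanSpace ℝ (Fin n)} (hx : x ∈ K) : coordProj I x ∈ K := by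
  have h : coordProj I x ∈ coordProj I '' K := ⟨x, hx, rfl⟩
  rw [hab.2] at h
  exact h.1

/-- Anti-blocking convex bodies are down-closed in the nonnegative orthant. -/
lemma mem_of_le {K : Set (EuclideanSpace ℝ (Fin n))} (hconv : Convex ℝ K)
    (hab : IsAntiBlocking K) {x : EuclideanSpace ℝ (Fin n)} (hx : x ∈ K)
    (y : EuclideanSpace ℝ (Fin n)) (hy0 : ∀ i, 0 ≤ y i) (hyx : ∀ i, y i ≤ x i) : y ∈ K := by
  suffices H : ∀ (I : Finset (Fin n)) (y : EuclideanSpace ℝ (Fin n)),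
      (∀ i, 0 ≤ y i) → (∀ i, y i ≤ x i) → (∀ i ∉ I, y i = x i) → y ∈ K by
    exact H Finset.univ y hy0 hyx (fun i hi => absurd (Finset.mem_univ i) hi)
  intro I
  induction I using Finset.induction_on with
  | empty =>
    intro y hy0 hyx h
    have : y = x := PiLp.ext fun i => h i (by simp)
    rwa [this]
  | @insert a s ha IH =>
    intro y hy0 hyx hout
    set y' : EuclideanSpace ℝ (Fin n) := WithLp.toLp 2 (Function.update y a (x a)) with hy'def
    have hy'app : ∀ i, y' i = if i = a then x a else y i := by
      intro i; simp [hy'def, Function.update_apply]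
    have hy'0 : ∀ i, 0 ≤ y' i := by
      intro i; rw [hy'app]
      split
      · exact le_trans (hy0 a) (hyx a)
      · exact hy0 i
    have hy'x : ∀ i, y' i ≤ x i := by
      intro i; rw [hy'app]
      split
      · subst ‹i = a›; exact le_rfl
      · exact hyx i
    have hy's : ∀ i ∉ s, y' i = x i := by
      intro i hi; rw [hy'app]
      by_cases h : i = a
      · rw [h, if_pos rfl]
      · simp only [h, if_false]
        exact hout i (by simp [Finset.mem_insert, h, hi])
    have hy'K : y' ∈ K := IH y' hy'0 hy'x hy's
    have hproj : coordProj ({a}ᶜ) y' ∈ K := coordProj_mem hab _ hy'K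
    have hprojapp : ∀ i, coordProj ({a} : Finset (Fin n))ᶜ y' i
        = if i = a then 0 else y i := by
      intro i
      by_cases h : i = a
      · simp [coordProj, h]
      · simp [coordProj, h, Finset.mem_compl, hy'app]
    by_cases hxa : x a = 0
    · have : y = coordProj ({a}ᶜ) y' := by
        ext i
        rw [hprojapp]
        by_cases h : i = a
        · rw [if_pos h, h]
          exact le_antisymm (hxa ▸ hyx a) (hy0 a)
        · rw [if_neg h]
      rw [this]; exact hproj
    · have hxa' : 0 < x a := lt_of_le_of_ne (le_trans (hy0 a) (hyx a)) (Ne.symm hxa)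
      set t := y a / x a with htdef
      have ht0 : 0 ≤ t := div_nonneg (hy0 a) hxa'.le
      have ht1 : t ≤ 1 := div_le_one_of_le₀ (hyx a) hxa'.le
      have hyeq : y = (1 - t) • coordProj ({a}ᶜ) y' + t • y' := by
        ext i
        have : ((1 - t) • coordProj ({a}ᶜ) y' + t • y') i
            = (1 - t) * coordProj ({a}ᶜ) y' i + t * y' i := rfl
        rw [this, hprojapp, hy'app]
        by_cases h : i = a
        · subst h
          simp only [if_pos rfl, ↓reduceIte]
          rw [htdef]
          field_simp
          ring
        · simp only [h, if_false]
          ring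
      rw [hyeq]
      exact hconv hproj hy'K (by linarith) ht0 (by ring)

lemma null_hyperplane (i : Fin n) :
    volume {z : EuclideanSpace ℝ (Fin n) | z i = 0} = 0 := by
  set f : EuclideanSpace ℝ (Fin n) →ₗ[ℝ] ℝ :=
    { toFun := fun z => z i, map_add' := fun _ _ => rfl, map_smul' := fun _ _ => rfl } with hf
  have hset : {z : EuclideanSpace ℝ (Fin n) | z i = 0} = (LinearMap.ker f : Set _) := by
    ext z; simp [LinearMap.mem_ker, hf]; rfl
  have hne : LinearMap.ker f ≠ ⊤ := by
    intro h
    have h1 : EuclideanSpace.single i (1 : ℝ) ∈ LinearMap.ker f := by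
      rw [h]; trivial
    have : f (EuclideanSpace.single i (1 : ℝ)) = 1 := by
      show (EuclideanSpace.single i (1 : ℝ)) i = 1
      rw [EuclideanSpace.single_apply]
      simp
    rw [LinearMap.mem_ker] at h1
    rw [h1] at this
    exact zero_ne_one this
  rw [hset]
  exact MeasureTheory.Measure.addHaar_submodule volume _ hne

section Decomp

variable {K K' : Set (EuclideanSpace ℝ (Fin n))}

lemma volume_decomp
    (hKconv : Convex ℝ K) (hKcomp : IsCompact K) (hKab : IsAntiBlocking K)
    (hK'conv : Convex ℝ K') (hK'comp : IsCompact K') (hK'ab : IsAntiBlocking K')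
    {l m : ℝ} (hl : 0 < l) (hm : 0 < m) :
    volume (l • K + m • (-K')) =
      ∑ I : Finset (Fin n),
        (ENNReal.ofReal (l ^ I.card) * volume (restrictCoords I '' K)) *
        (ENNReal.ofReal (m ^ (n - I.card)) * volume (restrictCoords Iᶜ '' K')) := by
  classical
  set piece : Finset (Fin n) → Set (EuclideanSpace ℝ (Fin n)) := fun I =>
    {z | restrictCoords I z ∈ l • (restrictCoords I '' K) ∧
         restrictCoords Iᶜ z ∈ m • (-(restrictCoords Iᶜ '' K'))} with hpiece
  have hAcomp : ∀ (I : Finset (Fin n)), IsCompact (restrictCoords I '' K) :=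
    fun I => hKcomp.image (restrictCoords_continuous I)
  have hBcomp : ∀ (I : Finset (Fin n)), IsCompact (restrictCoords Iᶜ '' K') :=
    fun I => hK'comp.image (restrictCoords_continuous Iᶜ)
  have hA'comp : ∀ (I : Finset (Fin n)), IsCompact (l • (restrictCoords I '' K)) := by
    intro I
    rw [← Set.image_smul]
    exact (hAcomp I).image (continuous_const_smul l)
  have hB'comp : ∀ (I : Finset (Fin n)),
      IsCompact (m • (-(restrictCoords Iᶜ '' K'))) := by
    intro I
    rw [← Set.image_smul]
    exact ((hBcomp I).neg).image (continuous_const_smul m)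
  have hpre : ∀ I, piece I = splitEquiv I ⁻¹'
      ((l • (restrictCoords I '' K)) ×ˢ (m • (-(restrictCoords Iᶜ '' K')))) := by
    intro I
    ext z
    simp [hpiece, splitEquiv_apply, Set.mem_prod]
  have hμpiece : ∀ I, volume (piece I) =
      volume (l • (restrictCoords I '' K)) * volume (m • (-(restrictCoords Iᶜ '' K'))) := by
    intro I
    rw [hpre I, (splitEquiv_measurePreserving I).measure_preimage
      (((hA'comp I).isClosed.measurableSet.prod
        (hB'comp I).isClosed.measurableSet).nullMeasurableSet),
      Measure.prod_prod]
  have hscaleA : ∀ I, volume (l • (restrictCoords I '' K)) =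
      ENNReal.ofReal (l ^ I.card) * volume (restrictCoords I '' K) := by
    intro I
    rw [Measure.addHaar_smul]
    congr 2
    rw [finrank_euclideanSpace, Fintype.card_coe, abs_of_nonneg (pow_nonneg hl.le _)]
  have hscaleB : ∀ I, volume (m • (-(restrictCoords Iᶜ '' K'))) =
      ENNReal.ofReal (m ^ (n - I.card)) * volume (restrictCoords Iᶜ '' K') := by
    intro I
    rw [Set.smul_set_neg, ← Set.neg_smul_set, Measure.addHaar_smul]
    congr 2
    rw [finrank_euclideanSpace, Fintype.card_coe, Finset.card_compl, Fintype.card_fin,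
      abs_pow, abs_neg, abs_of_nonneg hm.le]
  -- the pieces cover the Minkowski sum
  have hsub : ∀ I, piece I ⊆ l • K + m • (-K') := by
    intro I z hz
    rcases Set.mem_smul_set.mp hz.1 with ⟨a, ⟨x, hxK, rfl⟩, hla⟩
    rcases Set.mem_smul_set.mp hz.2 with ⟨b, hb, hmb⟩
    rcases Set.mem_neg.mp hb with ⟨y, hyK', hyb⟩
    have hb' : b = -(restrictCoords Iᶜ y) := by rw [hyb, neg_neg]
    rw [hb'] at hmb
    have hz_eq : z = l • coordProj I x + m • (-(coordProj Iᶜ y)) := by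
      ext i
      show z i = l * coordProj I x i + m * (-(coordProj Iᶜ y i))
      by_cases hi : i ∈ I
      · have h1 : l * x i = z i := congrArg (fun v => v ⟨i, hi⟩) hla
        have h2 : coordProj I x i = x i := if_pos hi
        have h3 : coordProj Iᶜ y i = 0 := if_neg (by simp [hi])
        rw [h2, h3, ← h1]
        ring
      · have h1 : m * (-(y i)) = z i := congrArg (fun v => v ⟨i, Finset.mem_compl.mpr hi⟩) hmb
        have h2 : coordProj I x i = 0 := if_neg hi
        have h3 : coordProj Iᶜ y i = y i := if_pos (Finset.mem_compl.mpr hi)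
        rw [h2, h3, ← h1]
        ring
    rw [hz_eq]
    exact Set.add_mem_add (Set.smul_mem_smul_set (coordProj_mem hKab I hxK))
      (Set.smul_mem_smul_set (Set.neg_mem_neg.mpr (coordProj_mem hK'ab Iᶜ hyK')))
  have hsup : l • K + m • (-K') ⊆ ⋃ I : Finset (Fin n), piece I := by
    intro z hz
    rw [Set.mem_iUnion]
    rcases hz with ⟨u, hu, v, hv, rfl⟩
    rcases Set.mem_smul_set.mp hu with ⟨x, hxK, rfl⟩
    rcases Set.mem_smul_set.mp hv with ⟨w, hw, rfl⟩
    have hyK' : -w ∈ K' := Set.mem_neg.mp hw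
    have hx0 : ∀ i, 0 ≤ x i := fun i => hKab.1 hxK i
    have hy0 : ∀ i, 0 ≤ -w i := fun i => hK'ab.1 hyK' i
    set z : EuclideanSpace ℝ (Fin n) := l • x + m • w with hzdef
    have hzi : ∀ i, z i = l * x i - m * (-w i) := by
      intro i
      show l * x i + m * w i = _
      ring
    set I : Finset (Fin n) := Finset.univ.filter (fun i => 0 ≤ z i) with hIdef
    have hmemI : ∀ i, i ∈ I ↔ 0 ≤ z i := by intro i; simp [hIdef]
    refine ⟨I, ?_, ?_⟩
    · -- first component
      set x' : EuclideanSpace ℝ (Fin n) :=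
        (WithLp.toLp 2 (fun i => if i ∈ I then z i / l else 0) : EuclideanSpace ℝ (Fin n)) with hx'def
      have hx'K : x' ∈ K := by
        refine mem_of_le hKconv hKab (coordProj_mem hKab I hxK) x' ?_ ?_
        · intro i
          show 0 ≤ if i ∈ I then z i / l else 0
          split
          · exact div_nonneg ((hmemI i).mp ‹i ∈ I›) hl.le
          · exact le_rfl
        · intro i
          show (if i ∈ I then z i / l else 0) ≤ coordProj I x i
          by_cases hi : i ∈ I
          · rw [if_pos hi]
            have : coordProj I x i = x i := if_pos hi
            rw [this, div_le_iff₀ hl]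
            have := mul_nonneg hm.le (hy0 i)
            rw [hzi i]
            linarith
          · rw [if_neg hi]
            have : coordProj I x i = 0 := if_neg hi
            rw [this]
      refine Set.mem_smul_set.mpr ⟨restrictCoords I x', ⟨x', hx'K, rfl⟩, ?_⟩
      ext i
      show l * (if (i : Fin n) ∈ I then z (i : Fin n) / l else 0) = z (i : Fin n)
      rw [if_pos i.2]
      field_simp
    · -- second component
      set y' : EuclideanSpace ℝ (Fin n) :=
        (WithLp.toLp 2 (fun i => if i ∈ Iᶜ then -z i / m else 0) : EuclideanSpace ℝ (Fin n)) with hy'def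
      have hy'K' : y' ∈ K' := by
        refine mem_of_le hK'conv hK'ab (coordProj_mem hK'ab Iᶜ hyK') y' ?_ ?_
        · intro i
          show 0 ≤ if i ∈ Iᶜ then -z i / m else 0
          split
          · rename_i hi
            have : ¬ (0 ≤ z i) := by
              intro h
              exact (Finset.mem_compl.mp hi) ((hmemI i).mpr h)
            exact div_nonneg (by linarith [lt_of_not_ge this]) hm.le
          · exact le_rfl
        · intro i
          show (if i ∈ Iᶜ then -z i / m else 0) ≤ coordProj Iᶜ (-w) i
          by_cases hi : i ∈ Iᶜ
          · rw [if_pos hi]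
            have : coordProj Iᶜ (-w) i = -w i := if_pos hi
            rw [this, div_le_iff₀ hm]
            have := mul_nonneg hl.le (hx0 i)
            rw [hzi i]
            linarith
          · rw [if_neg hi]
            have : coordProj Iᶜ (-w) i = 0 := if_neg hi
            rw [this]
      refine Set.mem_smul_set.mpr ⟨-(restrictCoords Iᶜ y'),
        Set.mem_neg.mpr (by rw [neg_neg]; exact ⟨y', hy'K', rfl⟩), ?_⟩
      ext i
      show m * (-(if (i : Fin n) ∈ Iᶜ then -z (i : Fin n) / m else 0)) = z (i : Fin n)
      rw [if_pos i.2]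
      field_simp
  have hcover : l • K + m • (-K') = ⋃ I : Finset (Fin n), piece I :=
    Set.Subset.antisymm hsup (Set.iUnion_subset hsub)
  have hdisj : Pairwise (Function.onFun (MeasureTheory.AEDisjoint volume) piece) := by
    intro I J hIJ
    obtain ⟨i, hi⟩ : ∃ i, (i ∈ I ∧ i ∉ J) ∨ (i ∈ J ∧ i ∉ I) := by
      by_contra hc
      push_neg at hc
      exact hIJ (Finset.ext fun i => by have := hc i; tauto)
    have pos : ∀ (L : Finset (Fin n)) (z : EuclideanSpace ℝ (Fin n)),
        z ∈ piece L → i ∈ L → 0 ≤ z i := by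
      intro L z hz hiL
      rcases Set.mem_smul_set.mp hz.1 with ⟨a, ⟨x, hxK, rfl⟩, hla⟩
      have h1 : l * x i = z i := congrArg (fun v => v ⟨i, hiL⟩) hla
      rw [← h1]
      exact mul_nonneg hl.le (hKab.1 hxK i)
    have neg : ∀ (L : Finset (Fin n)) (z : EuclideanSpace ℝ (Fin n)),
        z ∈ piece L → i ∉ L → z i ≤ 0 := by
      intro L z hz hiL
      rcases Set.mem_smul_set.mp hz.2 with ⟨b, hb, hmb⟩
      rcases Set.mem_neg.mp hb with ⟨y, hyK', hyb⟩
      have hb' : b = -(restrictCoords Lᶜ y) := by rw [hyb, neg_neg]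
      rw [hb'] at hmb
      have h2 : m * (-(y i)) = z i := congrArg (fun v => v ⟨i, Finset.mem_compl.mpr hiL⟩) hmb
      rw [← h2]
      have := hK'ab.1 hyK' i
      nlinarith
    have hkey : piece I ∩ piece J ⊆ {z : EuclideanSpace ℝ (Fin n) | z i = 0} := by
      rintro z ⟨hzI, hzJ⟩
      rcases hi with ⟨h1, h2⟩ | ⟨h1, h2⟩
      · exact le_antisymm (neg J z hzJ h2) (pos I z hzI h1)
      · exact le_antisymm (neg I z hzI h2) (pos J z hzJ h1)
    exact measure_mono_null hkey (null_hyperplane i)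
  have hnm : ∀ I : Finset (Fin n), MeasureTheory.NullMeasurableSet (piece I) volume := by
    intro I
    rw [hpre I]
    exact ((splitEquiv I).measurable
      ((hA'comp I).isClosed.measurableSet.prod
        (hB'comp I).isClosed.measurableSet)).nullMeasurableSet
  calc volume (l • K + m • (-K')) = volume (⋃ I : Finset (Fin n), piece I) := by rw [hcover]
    _ = ∑' I : Finset (Fin n), volume (piece I) := measure_iUnion₀ hdisj hnm
    _ = ∑ I : Finset (Fin n), volume (piece I) := tsum_fintype _
    _ = _ := by
        refine Finset.sum_congr rfl fun I _ => ?_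
        rw [hμpiece I, hscaleA I, hscaleB I]

lemma volume_decomp_real
    (hKconv : Convex ℝ K) (hKcomp : IsCompact K) (hKab : IsAntiBlocking K)
    (hK'conv : Convex ℝ K') (hK'comp : IsCompact K') (hK'ab : IsAntiBlocking K')
    {l m : ℝ} (hl : 0 < l) (hm : 0 < m) :
    (volume (l • K + m • (-K'))).toReal =
      ∑ I : Finset (Fin n), l ^ I.card * m ^ (n - I.card) *
        ((volume (restrictCoords I '' K)).toReal *
          (volume (restrictCoords Iᶜ '' K')).toReal) := by
  have hAcomp : ∀ (I : Finset (Fin n)), IsCompact (restrictCoords I '' K) :=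
    fun I => hKcomp.image (restrictCoords_continuous I)
  have hBcomp : ∀ (I : Finset (Fin n)), IsCompact (restrictCoords Iᶜ '' K') :=
    fun I => hK'comp.image (restrictCoords_continuous Iᶜ)
  rw [volume_decomp hKconv hKcomp hKab hK'conv hK'comp hK'ab hl hm, ENNReal.toReal_sum]
  · refine Finset.sum_congr rfl fun I _ => ?_
    rw [ENNReal.toReal_mul, ENNReal.toReal_mul, ENNReal.toReal_mul,
      ENNReal.toReal_ofReal (pow_nonneg hl.le _), ENNReal.toReal_ofReal (pow_nonneg hm.le _)]
    ring
  · intro I _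
    exact ENNReal.mul_ne_top
      (ENNReal.mul_ne_top ENNReal.ofReal_ne_top (hAcomp I).measure_lt_top.ne)
      (ENNReal.mul_ne_top ENNReal.ofReal_ne_top (hBcomp I).measure_lt_top.ne)

end Decomp

end ABHelper

/-- **Decomposition of mixed volumes of anti-blocking bodies in opposite orthants.**
For anti-blocking bodies `K, K' ⊆ ℝ₊ⁿ` and `0 ≤ j ≤ n`,
`Vₙ(K[j], -K'[n-j]) = (n choose j)⁻¹ ∑_E Vol_j(P_E K) · Vol_{n-j}(P_{E^⊥} K')`,
the sum running over all `j`-dimensional coordinate subspaces `E`. -/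
theorem mixed_volume_antiblocking_opposite_orthants
    (n : ℕ) (K K' : Set (EuclideanSpace ℝ (Fin n)))
    (hKconv : Convex ℝ K) (hKcomp : IsCompact K) (hKne : K.Nonempty)
    (hKab : IsAntiBlocking K)
    (hK'conv : Convex ℝ K') (hK'comp : IsCompact K') (hK'ne : K'.Nonempty)
    (hK'ab : IsAntiBlocking K')
    (j : ℕ) (hj : j ≤ n)
    (V : ℕ → ℝ)
    (hV : ∀ l m : ℝ, 0 ≤ l → 0 ≤ m →
      (volume (l • K + m • (-K'))).toReal =
        ∑ i ∈ Finset.range (n + 1), (n.choose i : ℝ) * l ^ i * m ^ (n - i) * V i) :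
    V j = (n.choose j : ℝ)⁻¹ *
      ∑ I ∈ (Finset.univ : Finset (Fin n)).powersetCard j,
        (volume (restrictCoords I '' K)).toReal *
          (volume (restrictCoords Iᶜ '' K')).toReal := by
    classical
  have hne0 : ((n.choose j : ℝ)) ≠ 0 := Nat.cast_ne_zero.mpr (Nat.choose_pos hj).ne'
  have hgroup : ∀ l : ℝ,
      (∑ I : Finset (Fin n), l ^ I.card * (1 : ℝ) ^ (n - I.card) *
        ((volume (restrictCoords I '' K)).toReal *
          (volume (restrictCoords Iᶜ '' K')).toReal))
      = ∑ i ∈ Finset.range (n + 1),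
          (∑ I ∈ (Finset.univ : Finset (Fin n)).powersetCard i,
            (volume (restrictCoords I '' K)).toReal *
              (volume (restrictCoords Iᶜ '' K')).toReal) * l ^ i := by
    intro l
    calc ∑ I : Finset (Fin n), l ^ I.card * (1 : ℝ) ^ (n - I.card) *
          ((volume (restrictCoords I '' K)).toReal *
            (volume (restrictCoords Iᶜ '' K')).toReal)
        = ∑ I ∈ (Finset.univ : Finset (Fin n)).powerset, l ^ I.card * (1 : ℝ) ^ (n - I.card) *
          ((volume (restrictCoords I '' K)).toReal *
            (volume (restrictCoords Iᶜ '' K')).toReal) := by rw [Finset.powerset_univ]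
      _ = ∑ i ∈ Finset.range ((Finset.univ : Finset (Fin n)).card + 1),
            ∑ I ∈ (Finset.univ : Finset (Fin n)).powersetCard i,
              l ^ I.card * (1 : ℝ) ^ (n - I.card) *
                ((volume (restrictCoords I '' K)).toReal *
                  (volume (restrictCoords Iᶜ '' K')).toReal) := by
          rw [Finset.powerset_card_disjiUnion]; exact Finset.sum_disjiUnion _ _ _
      _ = _ := by
          rw [Finset.card_univ, Fintype.card_fin]
          refine Finset.sum_congr rfl fun i hi => ?_
          rw [Finset.sum_mul]
          refine Finset.sum_congr rfl fun I hI => ?_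
          rw [(Finset.mem_powersetCard.mp hI).2, one_pow]
          ring
  have hkey : ∀ l : ℝ, 0 < l →
      ∑ i ∈ Finset.range (n + 1), ((n.choose i : ℝ) * V i) * l ^ i
      = ∑ i ∈ Finset.range (n + 1),
          (∑ I ∈ (Finset.univ : Finset (Fin n)).powersetCard i,
            (volume (restrictCoords I '' K)).toReal *
              (volume (restrictCoords Iᶜ '' K')).toReal) * l ^ i := by
    intro l hl
    have h2 := ABHelper.volume_decomp_real hKconv hKcomp hKab hK'conv hK'comp hK'ab hl one_pos
    rw [hV l 1 hl.le zero_le_one] at h2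
    calc ∑ i ∈ Finset.range (n + 1), ((n.choose i : ℝ) * V i) * l ^ i
        = ∑ i ∈ Finset.range (n + 1), (n.choose i : ℝ) * l ^ i * (1 : ℝ) ^ (n - i) * V i := by
          refine Finset.sum_congr rfl fun i _ => ?_
          rw [one_pow]
          ring
      _ = ∑ I : Finset (Fin n), l ^ I.card * (1 : ℝ) ^ (n - I.card) *
            ((volume (restrictCoords I '' K)).toReal *
              (volume (restrictCoords Iᶜ '' K')).toReal) := h2
      _ = _ := hgroup l
  set P : Polynomial ℝ :=
    ∑ i ∈ Finset.range (n + 1), Polynomial.C ((n.choose i : ℝ) * V i) * Polynomial.X ^ i with hP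
  set Q : Polynomial ℝ :=
    ∑ i ∈ Finset.range (n + 1),
      Polynomial.C (∑ I ∈ (Finset.univ : Finset (Fin n)).powersetCard i,
        (volume (restrictCoords I '' K)).toReal *
          (volume (restrictCoords Iᶜ '' K')).toReal) * Polynomial.X ^ i with hQ
  have hPQ : P = Q := by
    apply Polynomial.eq_of_infinite_eval_eq
    apply Set.Infinite.mono (s := Set.Ioi (0 : ℝ)) ?_ (Set.Ioi_infinite 0)
    intro x hx
    have := hkey x hx
    simpa [hP, hQ, Polynomial.eval_finset_sum] using this
  have hcoeff := congrArg (fun p => Polynomial.coeff p j) hPQ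
  simp only [hP, hQ, Polynomial.finset_sum_coeff, Polynomial.coeff_C_mul,
    Polynomial.coeff_X_pow, mul_ite, mul_one, mul_zero, Finset.sum_ite_eq,
    Finset.mem_range, Nat.lt_succ_iff, hj, if_true] at hcoeff
  rw [← hcoeff, inv_mul_cancel_left₀ hne0]
end
end

section
/- Let α_1 ≥ α_2 ≥ … ≥ α_n ≥ 0 and let K = conv{0, α_1 e_1, …, α_n e_n} ⊆ ℝ^n. Then Δ_n + K = (e_n + K) ∪ (Δ_n + P K), where P denotes the orthogonal projection onto span{e_1,…,e_{n−1}} (so P K = conv{0, α_1 e_1, …, α_{n−1} e_{n−1}}), and the two sets e_n + K and Δ_n + P K have intersection of n-dimensional Lebesgue measure zero. -/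
open MeasureTheory
open scoped Pointwise

noncomputable section

namespace SplitAux

lemma sum_coord {ι : Type*} {n : ℕ} (s : Finset ι) (f : ι → EuclideanSpace ℝ (Fin n)) (j : Fin n) :
    (∑ i ∈ s, f i) j = ∑ i ∈ s, f i j := by
  induction s using Finset.cons_induction with
  | empty => rfl
  | cons a s ha ih => rw [Finset.sum_cons, Finset.sum_cons, ← ih]; rfl

lemma sum_ite_univ {n : ℕ} (m : Fin n) (A : ℝ) (g : Fin n → ℝ) :
    ∑ i, (if i = m then A else g i) = A + ∑ i ∈ Finset.univ.erase m, g i := by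
  rw [← Finset.sum_erase_add Finset.univ _ (Finset.mem_univ m), if_pos rfl, add_comm]
  congr 1
  exact Finset.sum_congr rfl fun i hi => if_neg (Finset.ne_of_mem_erase hi)

lemma sum_erase_eq {n : ℕ} (m : Fin n) (g : Fin n → ℝ) :
    ∑ i ∈ Finset.univ.erase m, g i = (∑ i, g i) - g m := by
  have := Finset.sum_erase_add Finset.univ g (Finset.mem_univ m)
  linarith

lemma mem_hull_iff {n : ℕ} (v : Fin n → EuclideanSpace ℝ (Fin n)) (y : EuclideanSpace ℝ (Fin n)) :
    y ∈ convexHull ℝ (insert 0 (Set.range v)) ↔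
      ∃ c : Fin n → ℝ, (∀ i, 0 ≤ c i) ∧ ∑ i, c i ≤ 1 ∧ y = ∑ i, c i • v i := by
  constructor
  · intro hy
    have h : convexHull ℝ (insert 0 (Set.range v)) ⊆
        {y | ∃ c : Fin n → ℝ, (∀ i, 0 ≤ c i) ∧ ∑ i, c i ≤ 1 ∧ y = ∑ i, c i • v i} := by
      apply convexHull_min
      · intro y hy
        rcases hy with rfl | ⟨i, rfl⟩
        · exact ⟨0, fun i => le_rfl, by simp, by simp⟩
        · refine ⟨fun j => if j = i then 1 else 0, fun j => by positivity, by simp, ?_⟩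
          simp only [ite_smul, one_smul, zero_smul]
          rw [Finset.sum_ite_eq' Finset.univ i (fun j => v j)]
          simp
      · rintro p ⟨c, hc0, hc1, rfl⟩ q ⟨c', hc0', hc1', rfl⟩ a b ha hb hab
        refine ⟨fun i => a * c i + b * c' i,
          fun i => add_nonneg (mul_nonneg ha (hc0 i)) (mul_nonneg hb (hc0' i)), ?_, ?_⟩
        · calc ∑ i, (a * c i + b * c' i) = a * ∑ i, c i + b * ∑ i, c' i := by
                rw [Finset.sum_add_distrib, Finset.mul_sum, Finset.mul_sum]
          _ ≤ a * 1 + b * 1 := by gcongr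
          _ = 1 := by linarith
        · rw [Finset.smul_sum, Finset.smul_sum, ← Finset.sum_add_distrib]
          exact Finset.sum_congr rfl fun i _ => by rw [smul_smul, smul_smul, add_smul]
    exact h hy
  · rintro ⟨c, hc0, hc1, rfl⟩
    have hconv := convex_convexHull ℝ (insert 0 (Set.range v))
    have hmem := hconv.sum_mem (t := (Finset.univ : Finset (Option (Fin n))))
      (w := fun j => Option.elim j (1 - ∑ i, c i) c)
      (z := fun j => Option.elim j 0 v)
      (fun j _ => by cases j with
        | none => simpa using hc1
        | some i => exact hc0 i)
      (by rw [Fintype.sum_option]; simp)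
      (fun j _ => by cases j with
        | none => exact subset_convexHull ℝ _ (Set.mem_insert 0 _)
        | some i => exact subset_convexHull ℝ _ (Set.mem_insert_of_mem _ ⟨i, rfl⟩))
    rw [Fintype.sum_option] at hmem
    simpa using hmem

lemma coord_sum_single {n : ℕ} (c : Fin n → ℝ) (j : Fin n) :
    (∑ i, c i • EuclideanSpace.single i (1 : ℝ)) j = c j := by
  rw [sum_coord]
  simp only [PiLp.smul_apply, EuclideanSpace.single_apply, smul_eq_mul, mul_ite, mul_one,
    mul_zero]
  simp [Finset.sum_ite_eq]

lemma coord_sum_smul_single {n : ℕ} (α c : Fin n → ℝ) (j : Fin n) :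
    (∑ i, c i • α i • EuclideanSpace.single i (1 : ℝ)) j = c j * α j := by
  rw [sum_coord]
  simp only [PiLp.smul_apply, EuclideanSpace.single_apply, smul_eq_mul, mul_ite, mul_one,
    mul_zero]
  simp [Finset.sum_ite_eq]

lemma mem_coordSimplex_iff {n : ℕ} (x : EuclideanSpace ℝ (Fin n)) :
    x ∈ coordSimplex (Fin n) ↔ (∀ i, 0 ≤ x i) ∧ ∑ i, x i ≤ 1 := by
  rw [coordSimplex, mem_hull_iff]
  constructor
  · rintro ⟨c, hc0, hc1, rfl⟩
    refine ⟨fun j => by rw [coord_sum_single]; exact hc0 j, ?_⟩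
    calc ∑ j, (∑ i, c i • EuclideanSpace.single i (1:ℝ)) j = ∑ j, c j :=
          Finset.sum_congr rfl fun j _ => coord_sum_single c j
      _ ≤ 1 := hc1
  · rintro ⟨h0, h1⟩
    exact ⟨fun i => x i, h0, h1, PiLp.ext fun j => (coord_sum_single (fun i => x i) j).symm⟩

lemma mem_K_iff {n : ℕ} (α : Fin n → ℝ) (y : EuclideanSpace ℝ (Fin n)) :
    y ∈ convexHull ℝ (insert 0 (Set.range fun i => α i • EuclideanSpace.single i (1 : ℝ))) ↔
      ∃ c : Fin n → ℝ, (∀ i, 0 ≤ c i) ∧ ∑ i, c i ≤ 1 ∧ ∀ i, y i = c i * α i := by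
  rw [mem_hull_iff]
  constructor
  · rintro ⟨c, hc0, hc1, rfl⟩
    exact ⟨c, hc0, hc1, fun j => coord_sum_smul_single α c j⟩
  · rintro ⟨c, hc0, hc1, hc⟩
    exact ⟨c, hc0, hc1, PiLp.ext fun j => by rw [coord_sum_smul_single α c j]; exact hc j⟩

lemma mem_PK_iff {n : ℕ} (α : Fin n → ℝ) (m : Fin n) (w : EuclideanSpace ℝ (Fin n)) :
    w ∈ coordProj (Finset.univ.erase m) ''
        (convexHull ℝ (insert 0 (Set.range fun i => α i • EuclideanSpace.single i (1 : ℝ)))) ↔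
      ∃ c : Fin n → ℝ, (∀ i, 0 ≤ c i) ∧ ∑ i, c i ≤ 1 ∧ c m = 0 ∧ ∀ i, w i = c i * α i := by
  constructor
  · rintro ⟨y, hy, rfl⟩
    obtain ⟨c, hc0, hc1, hc⟩ := (mem_K_iff α y).1 hy
    refine ⟨fun i => if i = m then 0 else c i, ?_, ?_, if_pos rfl, fun i => ?_⟩
    · intro i; dsimp only; split_ifs with h
      · exact le_rfl
      · exact hc0 i
    · refine le_trans (Finset.sum_le_sum fun i _ => ?_) hc1
      split_ifs with h
      · exact hc0 i
      · exact le_rfl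
    · show (if i ∈ Finset.univ.erase m then y i else 0) = (if i = m then 0 else c i) * α i
      by_cases h : i = m
      · simp [h, Finset.mem_erase]
      · simp only [Finset.mem_erase, Finset.mem_univ, and_true, if_neg h,
          if_pos (show i ≠ m from h)]
        exact hc i
  · rintro ⟨c, hc0, hc1, hcm, hc⟩
    refine ⟨(WithLp.toLp 2 (fun i => c i * α i) : EuclideanSpace ℝ (Fin n)),
      (mem_K_iff α _).2 ⟨c, hc0, hc1, fun i => rfl⟩, ?_⟩
    ext i
    show (if i ∈ Finset.univ.erase m then c i * α i else 0) = w i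
    by_cases h : i = m
    · rw [h, if_neg (by simp), hc m, hcm, zero_mul]
    · simp only [Finset.mem_erase, Finset.mem_univ, and_true, if_pos (show i ≠ m from h)]
      exact (hc i).symm

lemma main_aux {n : ℕ} (α : Fin n → ℝ) (hα0 : ∀ i, 0 ≤ α i) (m : Fin n)
    (hm : ∀ i, α m ≤ α i) (K : Set (EuclideanSpace ℝ (Fin n)))
    (hK : K = convexHull ℝ
      (insert 0 (Set.range fun i => α i • EuclideanSpace.single i (1 : ℝ)))) :
    (coordSimplex (Fin n) + K =
      (({EuclideanSpace.single m (1 : ℝ)} : Set (EuclideanSpace ℝ (Fin n))) + K) ∪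
      (coordSimplex (Fin n) + coordProj (Finset.univ.erase m) '' K)) ∧
    volume ((({EuclideanSpace.single m (1 : ℝ)} : Set (EuclideanSpace ℝ (Fin n))) + K) ∩
      (coordSimplex (Fin n) + coordProj (Finset.univ.erase m) '' K)) = 0 := by
  have hKm : ∀ y : EuclideanSpace ℝ (Fin n), y ∈ K ↔
      ∃ c : Fin n → ℝ, (∀ i, 0 ≤ c i) ∧ ∑ i, c i ≤ 1 ∧ ∀ i, y i = c i * α i := by
    intro y; rw [hK]; exact mem_K_iff α y
  have hPKm : ∀ w : EuclideanSpace ℝ (Fin n), w ∈ coordProj (Finset.univ.erase m) '' K ↔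
      ∃ c : Fin n → ℝ, (∀ i, 0 ≤ c i) ∧ ∑ i, c i ≤ 1 ∧ c m = 0 ∧ ∀ i, w i = c i * α i := by
    intro w; rw [hK]; exact mem_PK_iff α m w
  have hem : EuclideanSpace.single m (1:ℝ) ∈ coordSimplex (Fin n) := by
    rw [mem_coordSimplex_iff]
    constructor
    · intro i; rw [EuclideanSpace.single_apply]; positivity
    · simp only [EuclideanSpace.single_apply]
      rw [Finset.sum_ite_eq' Finset.univ m (fun _ => (1:ℝ))]
      simp
  constructor
  · ext z
    simp only [Set.mem_union, Set.mem_add]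
    constructor
    · rintro ⟨x, hx, y, hy, hxy⟩
      obtain ⟨hx0, hx1⟩ := (mem_coordSimplex_iff x).1 hx
      obtain ⟨c, hc0, hc1, hyc⟩ := (hKm y).1 hy
      have hy0 : ∀ i, 0 ≤ y i := fun i => (hyc i) ▸ mul_nonneg (hc0 i) (hα0 i)
      have hzi : ∀ i, z i = x i + y i := fun i => by rw [← hxy]; rfl
      by_cases hA1 : (∑ i, x i) + y m ≤ 1
      · right
        refine ⟨(WithLp.toLp 2 (fun i => if i = m then x m + y m else x i) : EuclideanSpace ℝ (Fin n)), ?_,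
          (WithLp.toLp 2 (fun i => if i = m then 0 else y i) : EuclideanSpace ℝ (Fin n)), ?_, ?_⟩
        · rw [mem_coordSimplex_iff]
          constructor
          · intro i; dsimp only; split_ifs with h
            · exact add_nonneg (hx0 m) (hy0 m)
            · exact hx0 i
          · rw [sum_ite_univ m _ x, sum_erase_eq]; linarith
        · rw [hPKm]
          refine ⟨fun i => if i = m then 0 else c i, ?_, ?_, if_pos rfl, fun i => ?_⟩
          · intro i; dsimp only; split_ifs with h
            · exact le_rfl
            · exact hc0 i
          · refine le_trans (Finset.sum_le_sum fun i _ => ?_) hc1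
            split_ifs with h
            · exact hc0 i
            · exact le_rfl
          · dsimp only; split_ifs with h
            · rw [zero_mul]
            · exact hyc i
        · ext i
          show (if i = m then x m + y m else x i) + (if i = m then 0 else y i) = z i
          split_ifs with h
          · rw [h, hzi m, add_zero]
          · rw [hzi i]
      · push_neg at hA1
        by_cases hB : 1 ≤ x m + y m
        · left
          by_cases hαm : α m = 0
          · have hym : y m = 0 := by rw [hyc m, hαm, mul_zero]
            have hxmle : x m ≤ ∑ i, x i :=
              Finset.single_le_sum (fun i _ => hx0 i) (Finset.mem_univ m)
            have hxm : x m = 1 := by linarith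
            have hsum0 : ∑ j ∈ Finset.univ.erase m, x j = 0 := by
              have h1 : ∑ j ∈ Finset.univ.erase m, x j ≤ 0 := by
                rw [sum_erase_eq]; linarith
              have h2 : 0 ≤ ∑ j ∈ Finset.univ.erase m, x j :=
                Finset.sum_nonneg (fun j _ => hx0 j)
              linarith
            have hxi : ∀ i, i ≠ m → x i = 0 := by
              intro i hi
              exact (Finset.sum_eq_zero_iff_of_nonneg (fun j _ => hx0 j)).1 hsum0 i
                (Finset.mem_erase.2 ⟨hi, Finset.mem_univ i⟩)
            refine ⟨EuclideanSpace.single m 1, rfl, y, hy, ?_⟩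
            ext i
            show EuclideanSpace.single m (1:ℝ) i + y i = z i
            rw [EuclideanSpace.single_apply, hzi i]
            split_ifs with h
            · subst h; rw [hxm]
            · rw [hxi i h]
          · have hαmpos : 0 < α m := lt_of_le_of_ne (hα0 m) (Ne.symm hαm)
            have hαpos : ∀ i, 0 < α i := fun i => lt_of_lt_of_le hαmpos (hm i)
            refine ⟨EuclideanSpace.single m 1, rfl,
              (WithLp.toLp 2 (fun i => if i = m then x m + y m - 1 else x i + y i) :
                EuclideanSpace ℝ (Fin n)), ?_, ?_⟩
            · rw [hKm]
              refine ⟨fun i => if i = m then c m + (x m - 1)/α m else c i + x i / α i,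
                ?_, ?_, ?_⟩
              · intro i; dsimp only; split_ifs with h
                · have h2 : 0 ≤ (c m * α m + (x m - 1)) / α m :=
                    div_nonneg (by have := hyc m; linarith) hαmpos.le
                  calc (0:ℝ) ≤ (c m * α m + (x m - 1))/α m := h2
                    _ = c m + (x m - 1)/α m := by field_simp
                · exact add_nonneg (hc0 i) (div_nonneg (hx0 i) (hαpos i).le)
              · rw [sum_ite_univ]
                have h3 : ∑ i ∈ Finset.univ.erase m, (c i + x i / α i)
                    ≤ ∑ i ∈ Finset.univ.erase m, (c i + x i / α m) := by
                  refine Finset.sum_le_sum fun i _ => ?_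
                  have h4 : x i / α i ≤ x i / α m := by
                    apply div_le_div_of_nonneg_left (hx0 i) hαmpos (hm i)
                  linarith
                have h4 : ∑ i ∈ Finset.univ.erase m, (c i + x i / α m) =
                    ((∑ i, c i) - c m) + ((∑ i, x i) - x m)/α m := by
                  rw [Finset.sum_add_distrib, sum_erase_eq m c]
                  congr 1
                  rw [← Finset.sum_div, sum_erase_eq m x]
                have h5 : (x m - 1)/α m + ((∑ i, x i) - x m)/α m
                    = ((∑ i, x i) - 1)/α m := by
                  rw [← add_div]; ring_nf
                have h6 : ((∑ i, x i) - 1)/α m ≤ 0 :=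
                  div_nonpos_of_nonpos_of_nonneg (by linarith) hαmpos.le
                linarith
              · intro i; dsimp only; split_ifs with h
                · rw [h, hyc m]
                  field_simp
                  ring
                · rw [hyc i]
                  have hne := (hαpos i).ne'
                  field_simp
                  ring
            · ext i
              show EuclideanSpace.single m (1:ℝ) i +
                (if i = m then x m + y m - 1 else x i + y i) = z i
              rw [EuclideanSpace.single_apply, hzi i]
              split_ifs with h
              · subst h; ring
              · ring
        · push_neg at hB
          right
          set S := ∑ i ∈ Finset.univ.erase m, x i with hS
          set δ := (∑ i, x i) + y m - 1 with hδ
          have hS' : S = (∑ i, x i) - x m := by rw [hS, sum_erase_eq]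
          have hδpos : 0 < δ := by rw [hδ]; linarith
          have hδym : δ ≤ y m := by rw [hδ]; linarith
          have hympos : 0 < y m := lt_of_lt_of_le hδpos hδym
          have hαmpos : 0 < α m := by
            rcases lt_or_eq_of_le (hα0 m) with h | h
            · exact h
            · exfalso; rw [hyc m, ← h, mul_zero] at hympos; exact lt_irrefl 0 hympos
          have hαpos : ∀ i, 0 < α i := fun i => lt_of_lt_of_le hαmpos (hm i)
          have hδS : δ ≤ S := by rw [hδ, hS']; linarith
          have hSpos : 0 < S := lt_of_lt_of_le hδpos hδS
          refine ⟨(WithLp.toLp 2 (fun i => if i = m then x m + y m else x i - δ * x i / S) :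
              EuclideanSpace ℝ (Fin n)), ?_,
            (WithLp.toLp 2 (fun i => if i = m then 0 else y i + δ * x i / S) :
              EuclideanSpace ℝ (Fin n)), ?_, ?_⟩
          · rw [mem_coordSimplex_iff]
            constructor
            · intro i; dsimp only; split_ifs with h
              · exact add_nonneg (hx0 m) (hy0 m)
              · have h7 : δ * x i / S ≤ x i := by
                  rw [div_le_iff₀ hSpos]
                  nlinarith [hx0 i, hδS, hδpos]
                linarith
            · rw [sum_ite_univ]
              have h8 : ∑ i ∈ Finset.univ.erase m, (x i - δ * x i / S) = S - δ := by
                rw [Finset.sum_sub_distrib]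
                have h9 : ∑ i ∈ Finset.univ.erase m, δ * x i / S = δ * S / S := by
                  rw [← Finset.sum_div, ← Finset.mul_sum]
                rw [h9, mul_div_assoc, div_self hSpos.ne', mul_one, ← hS]
              rw [h8]
              rw [hS'] at *
              linarith [hδ]
          · rw [hPKm]
            refine ⟨fun i => if i = m then 0 else c i + δ * x i / (S * α i),
              ?_, ?_, if_pos rfl, fun i => ?_⟩
            · intro i; dsimp only; split_ifs with h
              · exact le_rfl
              · exact add_nonneg (hc0 i) (div_nonneg
                  (mul_nonneg hδpos.le (hx0 i)) (mul_nonneg hSpos.le (hαpos i).le))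
            · rw [sum_ite_univ]
              have h10 : ∑ i ∈ Finset.univ.erase m, (c i + δ * x i / (S * α i))
                  ≤ ∑ i ∈ Finset.univ.erase m, (c i + δ * x i / (S * α m)) := by
                refine Finset.sum_le_sum fun i _ => ?_
                have h11 : δ * x i / (S * α i) ≤ δ * x i / (S * α m) := by
                  apply div_le_div_of_nonneg_left (mul_nonneg hδpos.le (hx0 i))
                    (mul_pos hSpos hαmpos)
                  exact mul_le_mul_of_nonneg_left (hm i) hSpos.le
                linarith
              have h12 : ∑ i ∈ Finset.univ.erase m, (c i + δ * x i / (S * α m)) =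
                  ((∑ i, c i) - c m) + δ * S / (S * α m) := by
                rw [Finset.sum_add_distrib, sum_erase_eq m c]
                congr 1
                rw [← Finset.sum_div, ← Finset.mul_sum, ← hS]
              have h13 : δ * S / (S * α m) = δ / α m := by
                rw [mul_comm δ S, mul_div_mul_left _ _ hSpos.ne']
              have h14 : δ / α m ≤ c m := by
                rw [div_le_iff₀ hαmpos]
                have := hyc m
                linarith
              linarith
            · dsimp only; split_ifs with h
              · rw [zero_mul]
              · rw [hyc i]
                have hne := (hαpos i).ne'
                have hne2 := hSpos.ne'
                field_simp
          · ext i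
            show (if i = m then x m + y m else x i - δ * x i / S) +
              (if i = m then 0 else y i + δ * x i / S) = z i
            rw [hzi i]
            split_ifs with h
            · subst h; ring
            · ring
    · rintro (⟨a, ha, b, hb, hab⟩ | ⟨x, hx, w, hw, hxw⟩)
      · refine ⟨a, ?_, b, hb, hab⟩
        rw [Set.mem_singleton_iff] at ha; subst ha; exact hem
      · refine ⟨x, hx, w, ?_, hxw⟩
        obtain ⟨c, hc0, hc1, hcm, hc⟩ := (hPKm w).1 hw
        exact (hKm w).2 ⟨c, hc0, hc1, hc⟩
  · have hsub : (({EuclideanSpace.single m (1:ℝ)} : Set (EuclideanSpace ℝ (Fin n))) + K) ∩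
        (coordSimplex (Fin n) + coordProj (Finset.univ.erase m) '' K) ⊆
        {z : EuclideanSpace ℝ (Fin n) | z m = 1} := by
      rintro z ⟨hz1, hz2⟩
      obtain ⟨a, ha, b, hb, hab⟩ := Set.mem_add.1 hz1
      obtain ⟨x, hx, w, hw, hxw⟩ := Set.mem_add.1 hz2
      rw [Set.mem_singleton_iff] at ha; subst ha
      obtain ⟨c, hc0, hc1, hyc⟩ := (hKm b).1 hb
      obtain ⟨c', hc0', hc1', hcm', hwc⟩ := (hPKm w).1 hw
      obtain ⟨hx0, hx1⟩ := (mem_coordSimplex_iff x).1 hx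
      have h1 : z m = 1 + b m := by
        rw [← hab]
        show EuclideanSpace.single m (1:ℝ) m + b m = 1 + b m
        rw [EuclideanSpace.single_apply, if_pos rfl]
      have h2 : z m = x m + w m := by rw [← hxw]; rfl
      have hbm : 0 ≤ b m := (hyc m) ▸ mul_nonneg (hc0 m) (hα0 m)
      have hwm : w m = 0 := by rw [hwc m, hcm', zero_mul]
      have hxm : x m ≤ 1 :=
        le_trans (Finset.single_le_sum (fun i _ => hx0 i) (Finset.mem_univ m)) hx1
      show z m = 1
      rw [hwm] at h2
      linarith
    refine measure_mono_null hsub ?_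
    have himg : {z : EuclideanSpace ℝ (Fin n) | z m = 1} =
        (fun z => EuclideanSpace.single m (1:ℝ) + z) ''
          {z : EuclideanSpace ℝ (Fin n) | z m = 0} := by
      ext z
      simp only [Set.mem_image, Set.mem_setOf_eq]
      constructor
      · intro hz
        refine ⟨z - EuclideanSpace.single m 1, ?_, by abel⟩
        show z m - EuclideanSpace.single m (1:ℝ) m = 0
        rw [EuclideanSpace.single_apply, if_pos rfl, hz]; ring
      · rintro ⟨u, hu, rfl⟩
        show EuclideanSpace.single m (1:ℝ) m + u m = 1
        rw [EuclideanSpace.single_apply, if_pos rfl, hu]; ring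
    rw [himg, Set.image_add_left, measure_preimage_add]
    let s : Submodule ℝ (EuclideanSpace ℝ (Fin n)) :=
      { carrier := {z : EuclideanSpace ℝ (Fin n) | z m = 0}
        add_mem' := fun {a b} ha hb => by
          show a m + b m = 0
          rw [show a m = 0 from ha, show b m = 0 from hb, add_zero]
        zero_mem' := rfl
        smul_mem' := fun r {a} ha => by
          show r * a m = 0
          rw [show a m = 0 from ha, mul_zero] }
    have hs : s ≠ ⊤ := by
      intro h
      have hmem : EuclideanSpace.single m (1:ℝ) ∈ s := h ▸ Submodule.mem_top
      have h0 : EuclideanSpace.single m (1:ℝ) m = 0 := hmem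
      rw [EuclideanSpace.single_apply, if_pos rfl] at h0
      exact one_ne_zero h0
    exact Measure.addHaar_submodule volume s hs

end SplitAux

/-- **Decomposition `Δₙ + K = (eₙ + K) ∪ (Δₙ + PK)` (equation (4.2)).**
For `α₁ ≥ … ≥ αₙ ≥ 0` and `K = conv{0, α₁e₁, …, αₙeₙ}`, the sum `Δₙ + K` splits as the union
of the translate `eₙ + K` and `Δₙ + PK` (`P` the projection onto `span{e₁,…,e_{n-1}}`),
the two pieces intersecting in measure zero. -/
theorem simplex_add_aligned_simplex_split
    (n : ℕ) (hn : 0 < n) (α : Fin n → ℝ) (hα0 : ∀ i, 0 ≤ α i) (hαmono : Antitone α)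
    (K : Set (EuclideanSpace ℝ (Fin n)))
    (hK : K = convexHull ℝ
      (insert 0 (Set.range fun i => α i • EuclideanSpace.single i (1 : ℝ)))) :
    (coordSimplex (Fin n) + K =
      (({EuclideanSpace.single (⟨n - 1, by omega⟩ : Fin n) (1 : ℝ)} :
          Set (EuclideanSpace ℝ (Fin n))) + K) ∪
      (coordSimplex (Fin n) +
        coordProj (Finset.univ.erase (⟨n - 1, by omega⟩ : Fin n)) '' K)) ∧
    volume ((({EuclideanSpace.single (⟨n - 1, by omega⟩ : Fin n) (1 : ℝ)} :
          Set (EuclideanSpace ℝ (Fin n))) + K) ∩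
      (coordSimplex (Fin n) +
        coordProj (Finset.univ.erase (⟨n - 1, by omega⟩ : Fin n)) '' K)) = 0 := by
  exact SplitAux.main_aux α hα0 ⟨n - 1, by omega⟩
    (fun i => hαmono (by rw [Fin.le_def]; exact Nat.le_pred_of_lt i.isLt)) K hK
end
end
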